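/- If w is a μ-biworld and φ ∈ COEL is a formula with modal depth MD(φ) ≤ μ, then w resolves φ, i.e. φ^w ≠ u. -/

import Mathlib

open Ordinal

/-- Three truth values: true, false, unknown. -/
inductive TV : Type
  | t | f | u
deriving DecidableEq

namespace TV

/-- Inverse of a truth value. -/
def inv : TV → TV
  | t => f
  | f => t
  | u => u

/-- Binary greatest lower bound in the truth order f ≤ₜ u ≤ₜ t. -/
def tmin : TV → TV → TV
  | f, _ => f
  | _, f => f
  | u, _ => u
  | _, u => u
  | t, t => t

/-- Truth value of a proposition. -/
noncomputable def ofProp (p : Prop) : TV := by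
  classical
  exact if p then t else f

/-- Greatest lower bound of a set of truth values in the truth order f ≤ₜ u ≤ₜ t. -/
noncomputable def tglbSet (s : Set TV) : TV := by
  classical
  exact if f ∈ s then f else if u ∈ s then u else t

/-- Least upper bound of a (chain) set of truth values in the precision order
u ≤ₚ t, u ≤ₚ f. -/
noncomputable def plubSet (s : Set TV) : TV := by
  classical
  exact if t ∈ s then t else if f ∈ s then f else u

/-- Precision order on truth values: u below everything. -/
def ple (a b : TV) : Prop := a = u ∨ a = b

end TV

/-- Formulas of the language COEL. -/
inductive Form (Agent Atom : Type) : Type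
  | atom : Atom → Form Agent Atom
  | neg : Form Agent Atom → Form Agent Atom
  | and : Form Agent Atom → Form Agent Atom → Form Agent Atom
  | K : Agent → Form Agent Atom → Form Agent Atom
  | M : Agent → Form Agent Atom → Form Agent Atom
  | E : Set Agent → Form Agent Atom → Form Agent Atom
  | C : Set Agent → Form Agent Atom → Form Agent Atom

/-- Iterated `E_G` operator: `Eiter G 0 φ = φ`, `Eiter G (k+1) φ = E_G (Eiter G k φ)`. -/
def Form.Eiter {Agent Atom : Type} (G : Set Agent) : ℕ → Form Agent Atom → Form Agent Atom
  | 0, φ => φ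
  | k + 1, φ => .E G (Form.Eiter G k φ)

/-- Modal depth of a COEL formula. -/
noncomputable def Form.MD {Agent Atom : Type} : Form Agent Atom → Ordinal.{0}
  | .atom _ => 0
  | .neg φ => φ.MD
  | .and φ ψ => max φ.MD ψ.MD
  | .K _ φ => φ.MD + 1
  | .M _ φ => φ.MD + 1
  | .E _ φ => φ.MD + 1
  | .C _ φ => φ.MD + omega0

/-- A system of prebiworlds over agents `Agent` and propositional vocabulary `Atom`,
packaging the transfinite construction of μ-prebiworlds for all countable ordinals μ,
together with the recursive equations defining restriction. -/
structure PrebSys (Agent Atom : Type) where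
  /-- the collection of all prebiworlds (of all depths) -/
  W : Type 1
  /-- the depth of a prebiworld -/
  depth : W → Ordinal.{0}
  depth_countable : ∀ w, (depth w).card ≤ Cardinal.aleph0
  /-- the objective interpretation of a prebiworld -/
  obj : W → Set Atom
  /-- for a (μ+1)-prebiworld, the set A^w of μ-prebiworlds deemed (extendibly) possible -/
  poss : Agent → W → Set W
  /-- for a (μ+1)-prebiworld, the set Ā^w of μ-prebiworlds deemed (extendibly) impossible -/
  imposs : Agent → W → Set W
  /-- for a limit-depth prebiworld, its component (w)_α at α < depth w -/
  comp : W → Ordinal.{0} → W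
  /-- the restriction w|_α of w to depth α ≤ depth w -/
  restrict : W → Ordinal.{0} → W
  depth_poss : ∀ (A : Agent) (w v : W), v ∈ poss A w → depth w = depth v + 1
  depth_imposs : ∀ (A : Agent) (w v : W), v ∈ imposs A w → depth w = depth v + 1
  depth_comp : ∀ (w : W) (α : Ordinal.{0}), Order.IsSuccLimit (depth w) → α < depth w →
    depth (comp w α) = α
  comp_mono : ∀ (w : W) (α β : Ordinal.{0}), Order.IsSuccLimit (depth w) → α ≤ β → β < depth w →
    restrict (comp w β) α = comp w α
  ext_zero : ∀ w w' : W, depth w = 0 → depth w' = 0 → obj w = obj w' → w = w'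
  ext_succ : ∀ (w w' : W) (μ : Ordinal.{0}), depth w = μ + 1 → depth w' = μ + 1 →
    obj w = obj w' → (∀ A, poss A w = poss A w') → (∀ A, imposs A w = imposs A w') → w = w'
  ext_limit : ∀ w w' : W, Order.IsSuccLimit (depth w) → depth w' = depth w →
    (∀ α < depth w, comp w α = comp w' α) → w = w'
  depth_restrict : ∀ (w : W) (α : Ordinal.{0}), α ≤ depth w → depth (restrict w α) = α
  restrict_zero : ∀ w : W, obj (restrict w 0) = obj w
  restrict_limit : ∀ (w : W) (α β : Ordinal.{0}), Order.IsSuccLimit α → α ≤ depth w → β < α →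
    comp (restrict w α) β = restrict w β
  restrict_succ_limit : ∀ (w : W) (α : Ordinal.{0}), Order.IsSuccLimit (depth w) →
    α + 1 ≤ depth w → restrict w (α + 1) = comp w (α + 1)
  restrict_succ_obj : ∀ (w : W) (μ α : Ordinal.{0}), depth w = μ + 1 → α + 1 ≤ depth w →
    obj (restrict w (α + 1)) = obj w
  restrict_succ_poss : ∀ (w : W) (μ α : Ordinal.{0}) (A : Agent), depth w = μ + 1 →
    α + 1 ≤ depth w →
    poss A (restrict w (α + 1)) = (fun v => restrict v α) '' poss A w
  restrict_succ_imposs : ∀ (w : W) (μ α : Ordinal.{0}) (A : Agent), depth w = μ + 1 →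
    α + 1 ≤ depth w →
    imposs A (restrict w (α + 1)) = (fun v => restrict v α) '' imposs A w

/-- The precision order: v ≤ₚ w iff w restricted to the depth of v equals v. -/
def PrebSys.lep {Agent Atom : Type} (S : PrebSys Agent Atom) (v w : S.W) : Prop :=
  S.depth v ≤ S.depth w ∧ S.restrict w (S.depth v) = v

/-- A system of biworlds: prebiworlds together with the simultaneously
(transfinite-recursively) defined predicates `Biworld` and `Incompleted`
and their defining clauses. -/
structure BiSys (Agent Atom : Type) extends PrebSys Agent Atom where
  Biworld : W → Prop
  Incompleted : W → Prop
  biworld_zero : ∀ w : W, depth w = 0 → Biworld w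
  biworld_succ : ∀ (w : W) (μ : Ordinal.{0}), depth w = μ + 1 →
    (Biworld w ↔ ∀ A : Agent,
      poss A w ∪ imposs A w = {v | depth v = μ ∧ Biworld v} ∧
      ∀ v ∈ poss A w ∩ imposs A w, Incompleted v)
  biworld_limit : ∀ w : W, Order.IsSuccLimit (depth w) →
    (Biworld w ↔ ∀ α < depth w, Biworld (comp w α))
  incompleted_iff : ∀ w : W, Incompleted w ↔
    ∃ v₁ v₂ : W, v₁ ≠ v₂ ∧ Biworld v₁ ∧ Biworld v₂ ∧
      depth v₁ = depth w + 1 ∧ depth v₂ = depth w + 1 ∧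
      PrebSys.lep toPrebSys w v₁ ∧ PrebSys.lep toPrebSys w v₂

/-- A biworld is completed if it is not incompleted. -/
def BiSys.Completed {Agent Atom : Type} (S : BiSys Agent Atom) (w : S.W) : Prop :=
  ¬ S.Incompleted w

/-- For a limit-depth prebiworld w, the set A↑w. -/
def BiSys.upPoss {Agent Atom : Type} (S : BiSys Agent Atom) (A : Agent) (w : S.W) :
    Set S.W :=
  {v | S.depth v = S.depth w ∧ ∀ α < S.depth w, S.comp v α ∈ S.poss A (S.comp w (α + 1))}

/-- For a limit-depth prebiworld w, the set Ā↑w. -/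
def BiSys.upImposs {Agent Atom : Type} (S : BiSys Agent Atom) (A : Agent) (w : S.W) :
    Set S.W :=
  {v | S.depth v = S.depth w ∧ ∀ α < S.depth w, S.comp v α ∈ S.imposs A (S.comp w (α + 1))}

/-- A system of biworlds together with the three-valued valuation of COEL formulas
and its defining equations. -/
structure ValSys (Agent Atom : Type) extends BiSys Agent Atom where
  val : Form Agent Atom → W → TV
  val_atom : ∀ (P : Atom) (w : W), val (.atom P) w = TV.ofProp (P ∈ obj w)
  val_neg : ∀ (φ : Form Agent Atom) (w : W), val (.neg φ) w = (val φ w).inv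
  val_and : ∀ (φ ψ : Form Agent Atom) (w : W),
    val (.and φ ψ) w = (val φ w).tmin (val ψ w)
  val_K_zero : ∀ (A : Agent) (φ : Form Agent Atom) (w : W), depth w = 0 →
    val (.K A φ) w = TV.u
  val_K_succ : ∀ (A : Agent) (φ : Form Agent Atom) (w : W) (μ : Ordinal.{0}),
    depth w = μ + 1 → val (.K A φ) w = TV.tglbSet (val φ '' poss A w)
  val_K_limit : ∀ (A : Agent) (φ : Form Agent Atom) (w : W), Order.IsSuccLimit (depth w) →
    val (.K A φ) w = TV.plubSet {x | ∃ α < depth w, x = val (.K A φ) (comp w α)}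
  val_M_zero : ∀ (A : Agent) (φ : Form Agent Atom) (w : W), depth w = 0 →
    val (.M A φ) w = TV.u
  val_M_succ : ∀ (A : Agent) (φ : Form Agent Atom) (w : W) (μ : Ordinal.{0}),
    depth w = μ + 1 →
    val (.M A φ) w = TV.tglbSet ((fun v => (val φ v).inv) '' imposs A w)
  val_M_limit : ∀ (A : Agent) (φ : Form Agent Atom) (w : W), Order.IsSuccLimit (depth w) →
    val (.M A φ) w = TV.plubSet {x | ∃ α < depth w, x = val (.M A φ) (comp w α)}
  val_E : ∀ (G : Set Agent) (φ : Form Agent Atom) (w : W),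
    val (.E G φ) w = TV.tglbSet {x | ∃ A ∈ G, x = val (.K A φ) w}
  val_C : ∀ (G : Set Agent) (φ : Form Agent Atom) (w : W),
    val (.C G φ) w = TV.tglbSet {x | ∃ k : ℕ, 1 ≤ k ∧ x = val (Form.Eiter G k φ) w}

/-- A world: a completed (ω²+1)-biworld. -/
def ValSys.World {Agent Atom : Type} (S : ValSys Agent Atom) (w : S.W) : Prop :=
  S.Biworld w ∧ S.depth w = omega0 ^ 2 + 1 ∧ S.toBiSys.Completed w

/-- Accessibility in the canonical Kripke structure K*: w R_A w' iff w'|_{ω²} ∈ A^w. -/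
def ValSys.Racc {Agent Atom : Type} (S : ValSys Agent Atom) (A : Agent)
    (w w' : S.W) : Prop :=
  S.restrict w' (omega0 ^ 2) ∈ S.poss A w

/-- Two-valued Kripke valuation on the canonical Kripke structure K* of worlds. -/
def ValSys.kval {Agent Atom : Type} (S : ValSys Agent Atom) :
    Form Agent Atom → S.W → Prop
  | .atom P, w => P ∈ S.obj w
  | .neg φ, w => ¬ S.kval φ w
  | .and φ ψ, w => S.kval φ w ∧ S.kval ψ w
  | .K A φ, w => ∀ w', S.World w' → S.Racc A w w' → S.kval φ w'
  | .M A φ, w => ∀ w', S.World w' → S.kval φ w' → S.Racc A w w'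
  | .E G φ, w => ∀ A ∈ G, ∀ w', S.World w' → S.Racc A w w' → S.kval φ w'
  | .C G φ, w => ∀ w', Relation.TransGen (fun x y => S.World y ∧ ∃ A ∈ G, S.Racc A x y) w w' →
      S.kval φ w'

namespace ResolvesAux

lemma inv_ne_u {a : TV} (h : a ≠ TV.u) : a.inv ≠ TV.u := by
  cases a <;> simp_all [TV.inv]

lemma tmin_ne_u {a b : TV} (ha : a ≠ TV.u) (hb : b ≠ TV.u) : a.tmin b ≠ TV.u := by
  cases a <;> cases b <;> simp_all [TV.tmin]

lemma ofProp_ne_u (p : Prop) : TV.ofProp p ≠ TV.u := by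
  unfold TV.ofProp; split <;> simp

lemma tglbSet_ne_u {s : Set TV} (h : TV.u ∉ s) : TV.tglbSet s ≠ TV.u := by
  unfold TV.tglbSet
  split <;> simp_all

lemma plubSet_ne_u {s : Set TV} {x : TV} (hx : x ∈ s) (h : x ≠ TV.u) :
    TV.plubSet s ≠ TV.u := by
  unfold TV.plubSet
  split
  · simp
  · split
    · simp
    · cases x with
      | t => exact absurd hx ‹TV.t ∉ s›
      | f => exact absurd hx ‹TV.f ∉ s›
      | u => exact absurd rfl h

lemma MD_pos_le_zero {α : Ordinal.{0}} (h : α + 1 ≤ 0) : False := by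
  rw [Ordinal.add_one_eq_succ, Order.succ_le_iff] at h
  exact absurd h (by simp)

lemma K_resolves {Agent Atom : Type} (S : ValSys Agent Atom) (A : Agent)
    (φ : Form Agent Atom)
    (IH : ∀ v, S.Biworld v → φ.MD ≤ S.depth v → S.val φ v ≠ TV.u) :
    ∀ μ (w : S.W), S.depth w = μ → S.Biworld w → φ.MD + 1 ≤ μ →
      S.val (.K A φ) w ≠ TV.u := by
  intro μ
  induction μ using Ordinal.induction with
  | h μ ih =>
    intro w hd hb hμ
    rcases (Ordinal.zero_or_succ_or_isSuccLimit μ).imp_right (Or.imp_left fun (⟨ν, h⟩ : μ ∈ Set.range Order.succ) => (⟨ν, h.symm⟩ : ∃ ν, μ = Order.succ ν)) with h0 | ⟨ν, hν⟩ | hlim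
    · exact absurd (h0 ▸ hμ) (fun h => MD_pos_le_zero h)
    · have hd' : S.depth w = ν + 1 := by
        rw [hd, hν, Ordinal.add_one_eq_succ]
      rw [S.val_K_succ A φ w ν hd']
      apply tglbSet_ne_u
      rintro ⟨v, hv, hvu⟩
      have hset := ((S.biworld_succ w ν hd').mp hb A).1
      have hmem : v ∈ S.poss A w ∪ S.imposs A w := Or.inl hv
      rw [hset] at hmem
      have hle : φ.MD ≤ ν := by
        rw [hν, Ordinal.add_one_eq_succ, Order.succ_le_succ_iff] at hμ
        exact hμ
      exact IH v hmem.2 (hmem.1 ▸ hle) hvu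
    · have hlw : Order.IsSuccLimit (S.depth w) := hd ▸ hlim
      rw [S.val_K_limit A φ w hlw]
      have hαlt : φ.MD + 1 < μ := by
        have h1 : φ.MD < μ :=
          lt_of_lt_of_le ((Ordinal.add_one_eq_succ φ.MD) ▸ Order.lt_succ φ.MD) hμ
        rw [Ordinal.add_one_eq_succ]
        exact hlim.succ_lt h1
      have hαlt' : φ.MD + 1 < S.depth w := hd ▸ hαlt
      have hdc : S.depth (S.comp w (φ.MD + 1)) = φ.MD + 1 :=
        S.depth_comp w (φ.MD + 1) hlw hαlt'
      have hbc : S.Biworld (S.comp w (φ.MD + 1)) :=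
        (S.biworld_limit w hlw).mp hb (φ.MD + 1) hαlt'
      have hne : S.val (.K A φ) (S.comp w (φ.MD + 1)) ≠ TV.u :=
        ih (φ.MD + 1) hαlt (S.comp w (φ.MD + 1)) hdc hbc le_rfl
      exact plubSet_ne_u ⟨φ.MD + 1, hαlt', rfl⟩ hne

lemma M_resolves {Agent Atom : Type} (S : ValSys Agent Atom) (A : Agent)
    (φ : Form Agent Atom)
    (IH : ∀ v, S.Biworld v → φ.MD ≤ S.depth v → S.val φ v ≠ TV.u) :
    ∀ μ (w : S.W), S.depth w = μ → S.Biworld w → φ.MD + 1 ≤ μ →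
      S.val (.M A φ) w ≠ TV.u := by
  intro μ
  induction μ using Ordinal.induction with
  | h μ ih =>
    intro w hd hb hμ
    rcases (Ordinal.zero_or_succ_or_isSuccLimit μ).imp_right (Or.imp_left fun (⟨ν, h⟩ : μ ∈ Set.range Order.succ) => (⟨ν, h.symm⟩ : ∃ ν, μ = Order.succ ν)) with h0 | ⟨ν, hν⟩ | hlim
    · exact absurd (h0 ▸ hμ) (fun h => MD_pos_le_zero h)
    · have hd' : S.depth w = ν + 1 := by
        rw [hd, hν, Ordinal.add_one_eq_succ]
      rw [S.val_M_succ A φ w ν hd']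
      apply tglbSet_ne_u
      rintro ⟨v, hv, hvu⟩
      have hset := ((S.biworld_succ w ν hd').mp hb A).1
      have hmem : v ∈ S.poss A w ∪ S.imposs A w := Or.inr hv
      rw [hset] at hmem
      have hle : φ.MD ≤ ν := by
        rw [hν, Ordinal.add_one_eq_succ, Order.succ_le_succ_iff] at hμ
        exact hμ
      exact inv_ne_u (IH v hmem.2 (hmem.1 ▸ hle)) hvu
    · have hlw : Order.IsSuccLimit (S.depth w) := hd ▸ hlim
      rw [S.val_M_limit A φ w hlw]
      have hαlt : φ.MD + 1 < μ := by
        have h1 : φ.MD < μ :=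
          lt_of_lt_of_le ((Ordinal.add_one_eq_succ φ.MD) ▸ Order.lt_succ φ.MD) hμ
        rw [Ordinal.add_one_eq_succ]
        exact hlim.succ_lt h1
      have hαlt' : φ.MD + 1 < S.depth w := hd ▸ hαlt
      have hdc : S.depth (S.comp w (φ.MD + 1)) = φ.MD + 1 :=
        S.depth_comp w (φ.MD + 1) hlw hαlt'
      have hbc : S.Biworld (S.comp w (φ.MD + 1)) :=
        (S.biworld_limit w hlw).mp hb (φ.MD + 1) hαlt'
      have hne : S.val (.M A φ) (S.comp w (φ.MD + 1)) ≠ TV.u :=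
        ih (φ.MD + 1) hαlt (S.comp w (φ.MD + 1)) hdc hbc le_rfl
      exact plubSet_ne_u ⟨φ.MD + 1, hαlt', rfl⟩ hne

lemma E_resolves {Agent Atom : Type} (S : ValSys Agent Atom) (G : Set Agent)
    (φ : Form Agent Atom)
    (IH : ∀ v, S.Biworld v → φ.MD ≤ S.depth v → S.val φ v ≠ TV.u) :
    ∀ w : S.W, S.Biworld w → φ.MD + 1 ≤ S.depth w →
      S.val (.E G φ) w ≠ TV.u := by
  intro w hb hμ
  rw [S.val_E G φ w]
  apply tglbSet_ne_u
  rintro ⟨A, hA, hx⟩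
  exact K_resolves S A φ IH (S.depth w) w rfl hb hμ hx.symm

lemma MD_Eiter {Agent Atom : Type} (G : Set Agent) (φ : Form Agent Atom) :
    ∀ k : ℕ, (Form.Eiter G k φ).MD = φ.MD + k := by
  intro k
  induction k with
  | zero => simp [Form.Eiter, Form.MD]
  | succ n ihn =>
    show (Form.E G (Form.Eiter G n φ)).MD = _
    rw [Form.MD, ihn, Nat.cast_succ, ← add_assoc]

lemma Eiter_resolves {Agent Atom : Type} (S : ValSys Agent Atom) (G : Set Agent)
    (φ : Form Agent Atom)
    (IH : ∀ v, S.Biworld v → φ.MD ≤ S.depth v → S.val φ v ≠ TV.u) :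
    ∀ k : ℕ, ∀ v, S.Biworld v → (Form.Eiter G k φ).MD ≤ S.depth v →
      S.val (Form.Eiter G k φ) v ≠ TV.u := by
  intro k
  induction k with
  | zero => exact IH
  | succ n ihn =>
    intro v hbv hle
    show S.val (.E G (Form.Eiter G n φ)) v ≠ TV.u
    apply E_resolves S G _ ihn v hbv
    have : (Form.Eiter G (n+1) φ).MD = (Form.Eiter G n φ).MD + 1 := by
      rw [MD_Eiter, MD_Eiter, Nat.cast_succ, ← add_assoc]
    exact this ▸ hle

lemma main_resolves {Agent Atom : Type} (S : ValSys Agent Atom)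
    (φ : Form Agent Atom) :
    ∀ w : S.W, S.Biworld w → φ.MD ≤ S.depth w → S.val φ w ≠ TV.u := by
  induction φ with
  | atom P =>
    intro w _ _
    rw [S.val_atom]
    exact ofProp_ne_u _
  | neg φ ihφ =>
    intro w hb h
    rw [S.val_neg]
    exact inv_ne_u (ihφ w hb h)
  | and φ ψ ihφ ihψ =>
    intro w hb h
    rw [S.val_and]
    rw [Form.MD, max_le_iff] at h
    exact tmin_ne_u (ihφ w hb h.1) (ihψ w hb h.2)
  | K A φ ihφ =>
    intro w hb h
    exact K_resolves S A φ ihφ (S.depth w) w rfl hb h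
  | M A φ ihφ =>
    intro w hb h
    exact M_resolves S A φ ihφ (S.depth w) w rfl hb h
  | E G φ ihφ =>
    intro w hb h
    exact E_resolves S G φ ihφ w hb h
  | C G φ ihφ =>
    intro w hb h
    rw [S.val_C]
    apply tglbSet_ne_u
    rintro ⟨k, hk1, hx⟩
    refine Eiter_resolves S G φ ihφ k w hb ?_ hx.symm
    rw [MD_Eiter]
    refine le_trans ?_ h
    rw [Form.MD]
    exact add_le_add_right (Ordinal.nat_lt_omega0 k).le _

end ResolvesAux

/-- a μ-biworld resolves every formula of modal depth at most μ. -/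
theorem resolves_of_MD_le {Agent Atom : Type} (S : ValSys Agent Atom) (w : S.W)
    (hb : S.Biworld w) (φ : Form Agent Atom) (h : φ.MD ≤ S.depth w) :
    S.val φ w ≠ TV.u :=
  ResolvesAux.main_resolves S φ w hb h
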